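/- Differential operator representation of Gaussian moments in finite dimensions: for a positive semidefinite symmetric n×n matrix C and a polynomial F on ℝⁿ, the Gaussian expectation ∫ F dμ_C equals [exp((1/2)∑_{i,j} C_{ij} ∂ᵢ∂ⱼ) F](0), where the exponential acts as a finite sum on the polynomial F. -/

import Mathlib

open MeasureTheory ProbabilityTheory MvPolynomial
open Real Filter NNReal ENNReal

lemma integrable_pow_mul_exp_neg_mul_sq' {b : ℝ} (hb : 0 < b) (k : ℕ) :
    Integrable fun x : ℝ => x ^ k * Real.exp (-b * x ^ 2) := by
  have h := integrable_rpow_mul_exp_neg_mul_sq hb (s := (k : ℝ))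
    (lt_of_lt_of_le (by norm_num) (Nat.cast_nonneg k))
  simpa [Real.rpow_natCast] using h

lemma tendsto_pow_mul_exp_neg_mul_sq_cocompact' {b : ℝ} (hb : 0 < b) (k : ℕ) :
    Tendsto (fun x : ℝ => x ^ k * Real.exp (-b * x ^ 2)) (Filter.cocompact ℝ) (nhds 0) := by
  have h := tendsto_rpow_abs_mul_exp_neg_mul_sq_cocompact hb (k : ℝ)
  rw [tendsto_zero_iff_abs_tendsto_zero]
  refine h.congr fun x => ?_
  simp [Real.rpow_natCast, Function.comp, abs_mul, abs_pow,
    abs_of_nonneg (Real.exp_pos _).le]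

lemma deriv_aux {b : ℝ} (k : ℕ) (x : ℝ) :
    HasDerivAt (fun x : ℝ => x ^ (k+1) * Real.exp (-b * x ^ 2))
      ((k+1 : ℝ) * (x ^ k * Real.exp (-b * x ^ 2))
        - (2*b) * (x ^ (k+2) * Real.exp (-b * x ^ 2))) x := by
  have h1 : HasDerivAt (fun x : ℝ => x ^ (k+1)) ((k+1 : ℝ) * x ^ k) x := by
    simpa using hasDerivAt_pow (k+1) x
  have h2 : HasDerivAt (fun x : ℝ => Real.exp (-b * x ^ 2))
      (Real.exp (-b * x ^ 2) * (-b * (2 * x))) x := by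
    have : HasDerivAt (fun x : ℝ => -b * x ^ 2) (-b * (2 * x)) x := by
      simpa using (hasDerivAt_pow 2 x).const_mul (-b)
    exact this.exp
  have := h1.mul h2
  exact this.congr_deriv (by ring)

lemma integral_pow_mul_exp_step {b : ℝ} (hb : 0 < b) (k : ℕ) :
    (2*b) * ∫ x : ℝ, x ^ (k+2) * Real.exp (-b * x ^ 2)
      = (k+1 : ℝ) * ∫ x : ℝ, x ^ k * Real.exp (-b * x ^ 2) := by
  have hint : Integrable (fun x : ℝ => (k+1 : ℝ) * (x ^ k * Real.exp (-b * x ^ 2))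
      - (2*b) * (x ^ (k+2) * Real.exp (-b * x ^ 2))) :=
    ((integrable_pow_mul_exp_neg_mul_sq' hb k).const_mul _).sub
      ((integrable_pow_mul_exp_neg_mul_sq' hb (k+2)).const_mul _)
  have htop : Tendsto (fun x : ℝ => x ^ (k+1) * Real.exp (-b * x ^ 2)) atTop (nhds 0) :=
    (tendsto_pow_mul_exp_neg_mul_sq_cocompact' hb (k+1)).mono_left
      _root_.atTop_le_cocompact
  have hbot : Tendsto (fun x : ℝ => x ^ (k+1) * Real.exp (-b * x ^ 2)) atBot (nhds 0) :=
    (tendsto_pow_mul_exp_neg_mul_sq_cocompact' hb (k+1)).mono_left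
      _root_.atBot_le_cocompact
  have h0 := MeasureTheory.integral_of_hasDerivAt_of_tendsto (f' := fun x : ℝ =>
      (k+1 : ℝ) * (x ^ k * Real.exp (-b * x ^ 2)) - (2*b) * (x ^ (k+2) * Real.exp (-b * x ^ 2)))
      (fun x => deriv_aux k x) hint hbot htop
  rw [sub_zero] at h0
  rw [MeasureTheory.integral_sub ((integrable_pow_mul_exp_neg_mul_sq' hb k).const_mul _)
      ((integrable_pow_mul_exp_neg_mul_sq' hb (k+2)).const_mul _),
    MeasureTheory.integral_const_mul, MeasureTheory.integral_const_mul] at h0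
  linarith

lemma integral_one_mul_exp {b : ℝ} (hb : 0 < b) :
    ∫ x : ℝ, x ^ 1 * Real.exp (-b * x ^ 2) = 0 := by
  have hd : ∀ x : ℝ, HasDerivAt (fun x : ℝ => -(2*b)⁻¹ * Real.exp (-b * x ^ 2))
      (x ^ 1 * Real.exp (-b * x ^ 2)) x := by
    intro x
    have h2 : HasDerivAt (fun x : ℝ => Real.exp (-b * x ^ 2))
        (Real.exp (-b * x ^ 2) * (-b * (2 * x))) x := by
      have : HasDerivAt (fun x : ℝ => -b * x ^ 2) (-b * (2 * x)) x := by
        simpa using (hasDerivAt_pow 2 x).const_mul (-b)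
      exact this.exp
    have := h2.const_mul (-(2*b)⁻¹)
    exact this.congr_deriv (by field_simp)
  have htop : Tendsto (fun x : ℝ => -(2*b)⁻¹ * Real.exp (-b * x ^ 2)) atTop (nhds 0) := by
    have : Tendsto (fun x : ℝ => Real.exp (-b * x ^ 2)) atTop (nhds 0) := by
      have := tendsto_pow_mul_exp_neg_mul_sq_cocompact' hb 0
      simpa using this.mono_left _root_.atTop_le_cocompact
    simpa using this.const_mul (-(2*b)⁻¹)
  have hbot : Tendsto (fun x : ℝ => -(2*b)⁻¹ * Real.exp (-b * x ^ 2)) atBot (nhds 0) := by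
    have : Tendsto (fun x : ℝ => Real.exp (-b * x ^ 2)) atBot (nhds 0) := by
      have := tendsto_pow_mul_exp_neg_mul_sq_cocompact' hb 0
      simpa using this.mono_left _root_.atBot_le_cocompact
    simpa using this.const_mul (-(2*b)⁻¹)
  have h0 := MeasureTheory.integral_of_hasDerivAt_of_tendsto
      (f' := fun x : ℝ => x ^ 1 * Real.exp (-b * x ^ 2))
      hd (integrable_pow_mul_exp_neg_mul_sq' hb 1) hbot htop
  simpa using h0

/-- Gaussian moment sequence: `Mk k v` is the `k`-th moment of a centered Gaussian
with variance `v`. -/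
noncomputable def Mk : ℕ → ℝ → ℝ
  | 0, _ => 1
  | 1, _ => 0
  | (k+2), v => (k+1) * v * Mk k v

lemma two_step_induction {P : ℕ → Prop} (h0 : P 0) (h1 : P 1)
    (hs : ∀ k, P k → P (k+2)) : ∀ k, P k := by
  have key : ∀ k, P k ∧ P (k+1) := by
    intro k
    induction k with
    | zero => exact ⟨h0, h1⟩
    | succ n ih => exact ⟨ih.2, hs n ih.1⟩
  exact fun k => (key k).1

lemma Mk_zero_var : ∀ k, Mk k 0 = if k = 0 then 1 else 0 := by
  refine two_step_induction (by simp [Mk]) (by simp [Mk]) ?_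
  intro k ih
  simp [Mk]

lemma gaussianPDFReal_eq (v : ℝ≥0) (hv : v ≠ 0) (x : ℝ) :
    gaussianPDFReal 0 v x = (Real.sqrt (2 * π * v))⁻¹ * Real.exp (-(2*(v:ℝ))⁻¹ * x ^ 2) := by
  have hv' : (0:ℝ) < v := lt_of_le_of_ne v.coe_nonneg (by exact_mod_cast hv.symm)
  rw [gaussianPDFReal]
  congr 1
  congr 1
  field_simp
  ring

lemma integral_fun_gaussianReal (v : ℝ≥0) (hv : v ≠ 0) (g : ℝ → ℝ) :
    ∫ y, g y ∂(gaussianReal 0 v) = ∫ y, gaussianPDFReal 0 v y * g y := by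
  rw [gaussianReal_of_var_ne_zero 0 hv]
  have hpdf : gaussianPDF 0 v
      = fun x => ((Real.toNNReal (gaussianPDFReal 0 v x) : ℝ≥0) : ℝ≥0∞) := rfl
  rw [hpdf, integral_withDensity_eq_integral_smul
    ((measurable_gaussianPDFReal 0 v).real_toNNReal) g]
  congr 1
  funext y
  rw [NNReal.smul_def, smul_eq_mul, Real.coe_toNNReal _ (gaussianPDFReal_nonneg 0 v y)]

lemma integral_pow_gaussianReal (v : ℝ≥0) (k : ℕ) :
    ∫ y, y ^ k ∂(gaussianReal 0 v) = Mk k v := by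
  rcases eq_or_ne v 0 with rfl | hv
  · rw [gaussianReal_zero_var, integral_dirac, NNReal.coe_zero, Mk_zero_var]
    rcases Nat.eq_zero_or_pos k with rfl | hk
    · simp
    · rw [if_neg (Nat.pos_iff_ne_zero.mp hk), zero_pow (Nat.pos_iff_ne_zero.mp hk)]
  · have hv0 : (0:ℝ) < v := lt_of_le_of_ne v.coe_nonneg (by exact_mod_cast hv.symm)
    have hb : (0:ℝ) < (2*(v:ℝ))⁻¹ := by positivity
    set b : ℝ := (2*(v:ℝ))⁻¹ with hbdef
    set A : ℝ := (Real.sqrt (2 * π * v))⁻¹ with hAdef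
    have rep : ∀ m, ∫ y, y ^ m ∂(gaussianReal 0 v)
        = A * ∫ x, x ^ m * Real.exp (-b * x ^ 2) := by
      intro m
      rw [integral_fun_gaussianReal v hv, ← MeasureTheory.integral_const_mul]
      congr 1
      funext y
      rw [gaussianPDFReal_eq v hv]
      ring
    have h2b : 2 * b = (v:ℝ)⁻¹ := by
      rw [hbdef, mul_inv, ← mul_assoc, mul_inv_cancel₀ (two_ne_zero)]
      ring
    induction k using two_step_induction with
    | h0 => simp [Mk]
    | h1 => rw [rep 1, integral_one_mul_exp hb, Mk]; ring
    | hs k ih =>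
      rw [rep (k+2)]
      have hstep := integral_pow_mul_exp_step hb k
      rw [h2b] at hstep
      have hJ : ∫ x, x ^ (k+2) * Real.exp (-b * x ^ 2)
          = (k+1 : ℝ) * (v:ℝ) * ∫ x, x ^ k * Real.exp (-b * x ^ 2) := by
        have hvne : ((v:ℝ))⁻¹ ≠ 0 := inv_ne_zero (ne_of_gt hv0)
        field_simp at hstep ⊢
        linarith
      rw [hJ, show Mk (k+2) (v:ℝ) = ((k:ℝ)+1) * (v:ℝ) * Mk k (v:ℝ) from rfl, ← ih, rep k]
      ring

lemma integrable_pow_gaussianReal (v : ℝ≥0) (k : ℕ) :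
    Integrable (fun y : ℝ => y ^ k) (gaussianReal 0 v) := by
  rcases eq_or_ne v 0 with rfl | hv
  · rw [gaussianReal_zero_var]
    exact (integrable_const ((0:ℝ) ^ k)).congr (ae_eq_dirac (fun y : ℝ => y ^ k)).symm
  · have hv0 : (0:ℝ) < v := lt_of_le_of_ne v.coe_nonneg (by exact_mod_cast hv.symm)
    have hb : (0:ℝ) < (2*(v:ℝ))⁻¹ := by positivity
    rw [gaussianReal_of_var_ne_zero 0 hv,
      integrable_withDensity_iff (measurable_gaussianPDF 0 v)
        (Filter.Eventually.of_forall fun x => ENNReal.ofReal_lt_top)]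
    have : Integrable (fun x : ℝ =>
        (Real.sqrt (2 * π * v))⁻¹ * (x ^ k * Real.exp (-(2*(v:ℝ))⁻¹ * x ^ 2))) :=
      (integrable_pow_mul_exp_neg_mul_sq' hb k).const_mul _
    refine this.congr (Filter.Eventually.of_forall fun x => ?_)
    show (Real.sqrt (2 * π * v))⁻¹ * (x ^ k * Real.exp (-(2*(v:ℝ))⁻¹ * x ^ 2))
      = x ^ k * (ENNReal.ofReal (gaussianPDFReal 0 v x)).toReal
    rw [ENNReal.toReal_ofReal (gaussianPDFReal_nonneg 0 v x), gaussianPDFReal_eq v hv]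
    ring


/-- The second-order differential operator `(1/2) ∑_{i,j} C_{ij} ∂ᵢ ∂ⱼ` acting on
polynomials on `ℝⁿ`. -/
noncomputable def heatOperator (n : ℕ) (C : Fin n → Fin n → ℝ)
    (P : MvPolynomial (Fin n) ℝ) : MvPolynomial (Fin n) ℝ :=
  (1 / 2 : ℝ) • ∑ i, ∑ j, C i j • pderiv i (pderiv j P)

namespace GaussHeat

variable {n : ℕ}

lemma heat_add (C : Fin n → Fin n → ℝ) (P Q : MvPolynomial (Fin n) ℝ) :
    heatOperator n C (P + Q) = heatOperator n C P + heatOperator n C Q := by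
  simp only [heatOperator, map_add, smul_add, Finset.sum_add_distrib]

lemma heat_smul (C : Fin n → Fin n → ℝ) (a : ℝ) (P : MvPolynomial (Fin n) ℝ) :
    heatOperator n C (a • P) = a • heatOperator n C P := by
  simp only [heatOperator, _root_.map_smul]
  rw [← smul_comm (1/2 : ℝ) a]
  congr 1
  rw [Finset.smul_sum]
  refine Finset.sum_congr rfl fun i _ => ?_
  rw [Finset.smul_sum]
  refine Finset.sum_congr rfl fun j _ => ?_
  rw [Derivation.map_smul, Derivation.map_smul, smul_comm (C i j) a]

lemma heat_zero (C : Fin n → Fin n → ℝ) : heatOperator n C 0 = 0 := by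
  simp [heatOperator]

lemma heat_iter_add (C : Fin n → Fin n → ℝ) (m : ℕ) (P Q : MvPolynomial (Fin n) ℝ) :
    (heatOperator n C)^[m] (P + Q)
      = (heatOperator n C)^[m] P + (heatOperator n C)^[m] Q := by
  induction m generalizing P Q with
  | zero => simp
  | succ m ih => simp only [Function.iterate_succ_apply, heat_add, ih]

lemma heat_iter_smul (C : Fin n → Fin n → ℝ) (m : ℕ) (a : ℝ) (P : MvPolynomial (Fin n) ℝ) :
    (heatOperator n C)^[m] (a • P) = a • (heatOperator n C)^[m] P := by
  induction m generalizing P with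
  | zero => simp
  | succ m ih => simp only [Function.iterate_succ_apply, heat_smul, ih]

lemma totalDegree_pderiv_le (i : Fin n) (P : MvPolynomial (Fin n) ℝ) {d : ℕ}
    (h : P.totalDegree ≤ d + 1) : (pderiv i P).totalDegree ≤ d := by
  rw [show pderiv i P = ∑ s ∈ P.support, pderiv i (monomial s (coeff s P)) from by
    rw [← map_sum, ← P.as_sum]]
  refine le_trans (totalDegree_finset_sum _ _) (Finset.sup_le fun s hs => ?_)
  rw [pderiv_monomial]
  by_cases hsi : s i = 0
  · simp [hsi]
  · refine le_trans (totalDegree_monomial_le _ _) ?_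
    show (s - Finsupp.single i 1).sum (fun _ e => e) ≤ d
    have hadd : (s - Finsupp.single i 1) + Finsupp.single i 1 = s := by
      ext j
      simp only [Finsupp.add_apply, Finsupp.tsub_apply]
      rcases eq_or_ne j i with rfl | hj
      · simp only [Finsupp.single_eq_same]
        omega
      · simp [Finsupp.single_eq_of_ne' (Ne.symm hj)]
    have hsum : s.sum (fun _ e => e)
        = (s - Finsupp.single i 1).sum (fun _ e => e) + 1 := by
      conv_lhs => rw [← hadd]
      rw [Finsupp.sum_add_index' (fun _ => rfl) (fun _ _ _ => rfl),
        Finsupp.sum_single_index rfl]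
    have hle := le_totalDegree hs
    omega

lemma pderiv_eq_zero_of_totalDegree_eq_zero (i : Fin n) (P : MvPolynomial (Fin n) ℝ)
    (h : P.totalDegree = 0) : pderiv i P = 0 := by
  rw [show pderiv i P = ∑ s ∈ P.support, pderiv i (monomial s (coeff s P)) from by
    rw [← map_sum, ← P.as_sum]]
  refine Finset.sum_eq_zero fun s hs => ?_
  rw [pderiv_monomial, (totalDegree_eq_zero_iff _ P).mp h s hs i]
  simp

lemma totalDegree_heat_le (C : Fin n → Fin n → ℝ) (P : MvPolynomial (Fin n) ℝ) {d : ℕ}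
    (h : P.totalDegree ≤ d + 2) : (heatOperator n C P).totalDegree ≤ d := by
  refine le_trans (totalDegree_smul_le _ _) ?_
  refine le_trans (totalDegree_finset_sum _ _) (Finset.sup_le fun i _ => ?_)
  refine le_trans (totalDegree_finset_sum _ _) (Finset.sup_le fun j _ => ?_)
  refine le_trans (totalDegree_smul_le _ _) ?_
  exact totalDegree_pderiv_le i _ (totalDegree_pderiv_le j _ h)

lemma heat_eq_zero_of_le_one (C : Fin n → Fin n → ℝ) (P : MvPolynomial (Fin n) ℝ)
    (h : P.totalDegree ≤ 1) : heatOperator n C P = 0 := by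
  have hz : ∀ i j : Fin n, pderiv i (pderiv j P) = 0 := by
    intro i j
    refine pderiv_eq_zero_of_totalDegree_eq_zero i _ (Nat.le_zero.mp ?_)
    exact totalDegree_pderiv_le j _ h
  simp [heatOperator, hz]

lemma heat_iter_vanish (C : Fin n → Fin n → ℝ) :
    ∀ d (P : MvPolynomial (Fin n) ℝ), P.totalDegree ≤ d + 1 →
      (heatOperator n C)^[d+1] P = 0 := by
  intro d
  induction d with
  | zero => exact fun P hP => heat_eq_zero_of_le_one C P hP
  | succ d ih =>
    intro P hP
    rw [Function.iterate_succ_apply]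
    rcases le_or_gt P.totalDegree 1 with h1 | h1
    · rw [heat_eq_zero_of_le_one C P h1]
      exact Function.iterate_fixed (heat_zero C) (d+1)
    · refine ih (heatOperator n C P) ?_
      refine totalDegree_heat_le C P ?_
      omega

lemma heat_iter_eq_zero_of_lt (C : Fin n → Fin n → ℝ) {F : MvPolynomial (Fin n) ℝ} {m : ℕ}
    (h : F.totalDegree < m) : (heatOperator n C)^[m] F = 0 := by
  obtain ⟨r, hr⟩ : ∃ r, m = r + (F.totalDegree + 1) := by
    refine ⟨m - (F.totalDegree + 1), ?_⟩
    omega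
  subst hr
  rw [Function.iterate_add_apply, heat_iter_vanish C _ F (Nat.le_succ _)]
  exact Function.iterate_fixed (heat_zero C) r




noncomputable def L (c : Fin n → ℝ) : MvPolynomial (Fin n) ℝ := ∑ i, c i • X i

lemma eval_L (c x : Fin n → ℝ) : eval x (L c) = ∑ i, c i * x i := by
  simp [L, smul_eq_C_mul]

lemma totalDegree_L_le (c : Fin n → ℝ) : (L c).totalDegree ≤ 1 := by
  refine le_trans (totalDegree_finset_sum _ _) (Finset.sup_le fun i _ => ?_)
  exact le_trans (totalDegree_smul_le _ _) (totalDegree_X (R := ℝ) i).le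

lemma pderiv_L (c : Fin n → ℝ) (j : Fin n) : pderiv j (L c) = C (c j) := by
  simp [L, map_sum, Derivation.map_smul, pderiv_X, smul_eq_C_mul, Pi.single_apply,
    Finset.sum_ite_eq', mul_ite, mul_one, mul_zero]

lemma pderiv_L_pow (c : Fin n → ℝ) (m : ℕ) (j : Fin n) :
    pderiv j (L c ^ (m+1)) = (((m:ℝ)+1) * c j) • L c ^ m := by
  induction m with
  | zero => simp [pderiv_L, smul_eq_C_mul]
  | succ m ih =>
    rw [pow_succ, pderiv_mul, ih, pderiv_L, smul_mul_assoc, ← pow_succ]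
    rw [smul_eq_C_mul, smul_eq_C_mul]
    push_cast
    simp only [map_mul, map_add, map_one]
    ring

end GaussHeat
namespace GaussHeat
variable {n : ℕ}

lemma heat_L_pow (A : Fin n → Fin n → ℝ) (c : Fin n → ℝ) (k : ℕ) :
    heatOperator n A (L c ^ (k+2))
      = ((1/2 : ℝ) * (∑ i, ∑ j, c i * c j * A i j) * ((k:ℝ)+2) * ((k:ℝ)+1)) • L c ^ k := by
  have h1 : ∀ i j : Fin n, pderiv i (pderiv j (L c ^ (k+2)))
      = (((k:ℝ)+2) * c j * (((k:ℝ)+1) * c i)) • L c ^ k := by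
    intro i j
    rw [show k+2 = (k+1)+1 from rfl, pderiv_L_pow, Derivation.map_smul, pderiv_L_pow,
      smul_smul]
    congr 2
    push_cast
    ring
  simp only [heatOperator, h1, smul_smul, ← Finset.sum_smul]
  congr 1
  simp only [Finset.sum_mul, Finset.mul_sum]
  refine Finset.sum_congr rfl fun i _ => ?_
  refine Finset.sum_congr rfl fun j _ => ?_
  ring

lemma constantCoeff_L (c : Fin n → ℝ) : constantCoeff (L c) = 0 := by
  simp [L, smul_eq_C_mul, map_sum, constantCoeff_X]

lemma eval0_L (c : Fin n → ℝ) : eval (0 : Fin n → ℝ) (L c) = 0 := by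
  simp [constantCoeff_L]

lemma eval0_smul (a : ℝ) (P : MvPolynomial (Fin n) ℝ) (x : Fin n → ℝ) :
    eval x (a • P) = a * eval x P := by
  rw [smul_eq_C_mul, map_mul, eval_C]

lemma eval0_heat_iter_L (A : Fin n → Fin n → ℝ) (c : Fin n → ℝ) :
    ∀ k m, eval (0 : Fin n → ℝ) ((heatOperator n A)^[m] (L c ^ k))
      = if k = 2*m then ((∑ i, ∑ j, c i * c j * A i j) / 2)^m * (2*m).factorial else 0 := by
  refine two_step_induction ?_ ?_ ?_
  · intro m
    cases m with
    | zero => simp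
    | succ m =>
      rw [if_neg (by omega), pow_zero, Function.iterate_succ_apply,
        heat_eq_zero_of_le_one A 1 (by simp), Function.iterate_fixed (heat_zero A) m]
      simp
  · intro m
    cases m with
    | zero => simp [constantCoeff_L, eval0_L]
    | succ m =>
      rw [if_neg (by omega), pow_one, Function.iterate_succ_apply,
        heat_eq_zero_of_le_one A (L c) (totalDegree_L_le c),
        Function.iterate_fixed (heat_zero A) m]
      simp
  · intro k ih m
    cases m with
    | zero =>
      rw [if_neg (by omega), Function.iterate_zero_apply, map_pow, eval0_L,
        zero_pow (by omega : k + 2 ≠ 0)]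
    | succ m =>
      rw [Function.iterate_succ_apply, heat_L_pow, heat_iter_smul, eval0_smul, ih m]
      by_cases hk : k = 2*m
      · rw [if_pos hk, if_pos (by omega)]
        subst hk
        rw [show 2*(m+1) = (2*m+1)+1 from by omega, Nat.factorial_succ,
          show (2*m+1) = (2*m)+1 from rfl, Nat.factorial_succ]
        push_cast
        ring
      · rw [if_neg hk, if_neg (by omega), mul_zero]

/-- The "exponential of the heat operator evaluated at 0" functional. -/
noncomputable def Eop (A : Fin n → Fin n → ℝ) (F : MvPolynomial (Fin n) ℝ) : ℝ :=
  ∑' m, (1 / (m.factorial : ℝ)) * eval (0 : Fin n → ℝ) ((heatOperator n A)^[m] F)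

lemma Eop_eq_sum (A : Fin n → Fin n → ℝ) (F : MvPolynomial (Fin n) ℝ) (N : ℕ)
    (hN : F.totalDegree < N) :
    Eop A F = ∑ m ∈ Finset.range N,
      (1 / (m.factorial : ℝ)) * eval (0 : Fin n → ℝ) ((heatOperator n A)^[m] F) := by
  refine tsum_eq_sum fun m hm => ?_
  rw [heat_iter_eq_zero_of_lt A (by simp only [Finset.mem_range, not_lt] at hm; omega)]
  simp

lemma Eop_smul_add (A : Fin n → Fin n → ℝ) (a : ℝ) (F G : MvPolynomial (Fin n) ℝ) :
    Eop A (a • F + G) = a * Eop A F + Eop A G := by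
  set N := max (a • F + G).totalDegree (max F.totalDegree G.totalDegree) + 1 with hN
  rw [Eop_eq_sum A _ N (by omega), Eop_eq_sum A F N (by
      have := le_max_left F.totalDegree G.totalDegree
      have := le_max_right (a • F + G).totalDegree (max F.totalDegree G.totalDegree)
      omega),
    Eop_eq_sum A G N (by
      have := le_max_right F.totalDegree G.totalDegree
      have := le_max_right (a • F + G).totalDegree (max F.totalDegree G.totalDegree)
      omega)]
  rw [Finset.mul_sum, ← Finset.sum_add_distrib]
  refine Finset.sum_congr rfl fun m _ => ?_
  rw [heat_iter_add, heat_iter_smul, map_add, eval0_smul]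
  ring

lemma Mk_even : ∀ (m : ℕ) (v : ℝ),
    (m.factorial : ℝ) * Mk (2*m) v = (v/2)^m * ((2*m).factorial : ℝ) := by
  intro m
  induction m with
  | zero => intro v; simp [Mk]
  | succ m ih =>
    intro v
    have h1 : Mk (2*(m+1)) v = ((2*m:ℝ)+1) * v * Mk (2*m) v := by
      rw [show 2*(m+1) = (2*m)+2 from by omega]
      show ((2*m : ℕ) + 1 : ℝ) * v * Mk (2*m) v = _
      push_cast
      ring
    rw [h1, show 2*(m+1) = (2*m+1)+1 from by omega, Nat.factorial_succ,
      show (2*m+1) = (2*m)+1 from rfl, Nat.factorial_succ, Nat.factorial_succ]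
    push_cast
    linear_combination ((m:ℝ)+1) * (2*(m:ℝ)+1) * v * (ih v)

lemma Mk_odd : ∀ (m : ℕ) (v : ℝ), Mk (2*m+1) v = 0 := by
  intro m
  induction m with
  | zero => intro v; simp [Mk]
  | succ m ih =>
    intro v
    rw [show 2*(m+1)+1 = (2*m+1)+2 from by omega]
    show ((2*m+1 : ℕ) + 1 : ℝ) * v * Mk (2*m+1) v = 0
    rw [ih v, mul_zero]

lemma Eop_L_pow (A : Fin n → Fin n → ℝ) (c : Fin n → ℝ) (k : ℕ) :
    Eop A (L c ^ k) = Mk k (∑ i, ∑ j, c i * c j * A i j) := by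
  set v : ℝ := ∑ i, ∑ j, c i * c j * A i j with hv
  rcases Nat.even_or_odd k with ⟨m, hm⟩ | ⟨m, hm⟩
  · rw [show k = 2*m from by omega]
    rw [Eop, tsum_eq_single m (fun m' hm' => by
      rw [eval0_heat_iter_L A c (2*m) m', if_neg (by omega), mul_zero])]
    rw [eval0_heat_iter_L A c (2*m) m, if_pos rfl]
    have hfac : (m.factorial : ℝ) ≠ 0 := Nat.cast_ne_zero.mpr (Nat.factorial_ne_zero m)
    have h := Mk_even m v
    rw [← hv]
    field_simp at h ⊢
    first
      | linear_combination h
      | linear_combination (2:ℝ) * h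
      | linear_combination (1/2:ℝ) * h
      | nlinarith [h]
  · rw [show k = 2*m+1 from by omega, Mk_odd]
    rw [Eop]
    convert tsum_zero with m'
    rw [eval0_heat_iter_L A c (2*m+1) m', if_neg (by omega), mul_zero]

end GaussHeat
namespace GaussHeat
variable {n : ℕ}

lemma prod_smul_fin (s : Finset (Fin n)) (b : Fin n → ℝ)
    (f : Fin n → MvPolynomial (Fin n) ℝ) :
    ∏ i ∈ s, b i • f i = (∏ i ∈ s, b i) • ∏ i ∈ s, f i := by
  induction s using Finset.cons_induction_on with
  | empty => simp
  | cons _ _ hj ih => rw [Finset.prod_cons, Finset.prod_cons, Finset.prod_cons, ih,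
      smul_mul_smul_comm]

lemma prod_X_pow_fn (k : Fin n → ℕ) :
    (∏ i, (X i : MvPolynomial (Fin n) ℝ) ^ k i)
      = monomial (Finsupp.equivFunOnFinite.symm k) 1 := by
  have h1 : (∏ i, (X i : MvPolynomial (Fin n) ℝ) ^ k i)
      = ∏ i, (X i : MvPolynomial (Fin n) ℝ) ^ (Finsupp.equivFunOnFinite.symm k) i :=
    Finset.prod_congr rfl fun i _ => rfl
  rw [h1, ← prod_X_pow_eq_monomial]
  exact (Finset.prod_subset (Finset.subset_univ _) fun i _ hi => by
    rw [Finsupp.notMem_support_iff.mp hi, pow_zero]).symm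

lemma L_pow_expand (cc : Fin n → ℝ) (d : ℕ) :
    L cc ^ d = ∑ k ∈ Finset.piAntidiag Finset.univ d,
      ((Nat.multinomial Finset.univ k : ℝ) * ∏ i, cc i ^ k i) • ∏ i, (X i : MvPolynomial (Fin n) ℝ) ^ k i := by
  rw [L, Finset.sum_pow_eq_sum_piAntidiag]
  refine Finset.sum_congr rfl fun k _ => ?_
  rw [show ∀ m : ℕ, (m : MvPolynomial (Fin n) ℝ) = C (m : ℝ) from fun m => by
    rw [map_natCast], ← smul_eq_C_mul]
  simp only [smul_pow]
  rw [prod_smul_fin, smul_smul]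

lemma phi_monomial_eq_zero (φ : MvPolynomial (Fin n) ℝ →ₗ[ℝ] ℝ)
    (hφ : ∀ (c : Fin n → ℝ) (k : ℕ), φ (L c ^ k) = 0) (s : Fin n →₀ ℕ) (a : ℝ) :
    φ (monomial s a) = 0 := by
  set d : ℕ := s.sum fun _ e => e with hd
  set P : MvPolynomial (Fin n) ℝ := ∑ k ∈ Finset.piAntidiag Finset.univ d,
    ((Nat.multinomial Finset.univ k : ℝ) * φ (∏ i, (X i : MvPolynomial (Fin n) ℝ) ^ k i))
      • ∏ i, (X i : MvPolynomial (Fin n) ℝ) ^ k i with hP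
  have hevalP : ∀ cc : Fin n → ℝ, eval cc P = φ (L cc ^ d) := by
    intro cc
    rw [hP, L_pow_expand, map_sum, map_sum]
    refine Finset.sum_congr rfl fun k _ => ?_
    rw [eval0_smul, φ.map_smul, smul_eq_mul]
    simp only [map_prod, map_pow, eval_X]
    ring
  have hP0 : P = 0 := by
    apply MvPolynomial.funext
    intro x
    rw [hevalP, hφ, map_zero]
  have hmem : (⇑s : Fin n → ℕ) ∈ Finset.piAntidiag Finset.univ d := by
    rw [Finset.mem_piAntidiag]
    refine ⟨?_, fun i _ => Finset.mem_univ i⟩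
    rw [hd]
    exact (Finsupp.sum_fintype (f := s) (g := fun _ e => e) (fun i => rfl)).symm
  have hcoeff : coeff s P
      = (Nat.multinomial Finset.univ (⇑s) : ℝ) * φ (∏ i, (X i : MvPolynomial (Fin n) ℝ) ^ s i) := by
    rw [hP, coeff_sum]
    rw [Finset.sum_eq_single_of_mem (⇑s) hmem]
    · rw [coeff_smul, prod_X_pow_fn, Finsupp.equivFunOnFinite_symm_coe, coeff_monomial,
        if_pos rfl, smul_eq_mul, mul_one]
    · intro k _ hk
      rw [coeff_smul, prod_X_pow_fn, coeff_monomial, if_neg, smul_eq_mul, mul_zero]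
      intro hEq
      exact hk (by rw [← hEq]; rfl)
  have hmultne : (Nat.multinomial Finset.univ (⇑s) : ℝ) ≠ 0 :=
    Nat.cast_ne_zero.mpr (Nat.pos_iff_ne_zero.mp (Nat.multinomial_pos _ _))
  have hφs : φ (∏ i, (X i : MvPolynomial (Fin n) ℝ) ^ s i) = 0 := by
    have := hcoeff
    rw [hP0] at this
    simp only [coeff_zero] at this
    exact (mul_eq_zero.mp this.symm).resolve_left hmultne
  have hmono : (monomial s a : MvPolynomial (Fin n) ℝ)
      = a • ∏ i, (X i : MvPolynomial (Fin n) ℝ) ^ s i := by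
    rw [show (∏ i, (X i : MvPolynomial (Fin n) ℝ) ^ s i)
        = ∏ i, (X i : MvPolynomial (Fin n) ℝ) ^ (⇑s) i from rfl, prod_X_pow_fn,
      Finsupp.equivFunOnFinite_symm_coe, smul_monomial, smul_eq_mul, mul_one]
  rw [hmono, φ.map_smul, smul_eq_mul, hφs, mul_zero]

set_option synthInstance.maxHeartbeats 1000000 in
lemma span_L_pow_eq_top :
    Submodule.span ℝ {P : MvPolynomial (Fin n) ℝ | ∃ c k, P = L c ^ k} = ⊤ := by
  by_contra h
  obtain ⟨φ, hφ0, hmap⟩ :=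
    Submodule.exists_dual_map_eq_bot_of_lt_top (p := Submodule.span ℝ
      {P : MvPolynomial (Fin n) ℝ | ∃ c k, P = L c ^ k}) (lt_top_iff_ne_top.mpr h)
      inferInstance
  have hvanish : ∀ (c : Fin n → ℝ) (k : ℕ), φ (L c ^ k) = 0 := by
    intro c k
    have hx : L c ^ k ∈ Submodule.span ℝ {P : MvPolynomial (Fin n) ℝ | ∃ c k, P = L c ^ k} :=
      Submodule.subset_span ⟨c, k, rfl⟩
    have : φ (L c ^ k) ∈ Submodule.map φ (Submodule.span ℝ
        {P : MvPolynomial (Fin n) ℝ | ∃ c k, P = L c ^ k}) := Submodule.mem_map_of_mem hx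
    rw [hmap] at this
    simpa using this
  apply hφ0
  refine LinearMap.ext fun F => ?_
  rw [show F = ∑ v ∈ F.support, monomial v (coeff v F) from F.as_sum, map_sum]
  simp only [LinearMap.zero_apply]
  exact Finset.sum_eq_zero fun v _ => phi_monomial_eq_zero φ hvanish v _

end GaussHeat
namespace GaussHeat
variable {n : ℕ}

lemma measurable_linfun (c : Fin n → ℝ) :
    Measurable (fun x : Fin n → ℝ => ∑ i, c i * x i) :=
  Finset.measurable_sum _ fun i _ => (measurable_pi_apply (X := fun _ => ℝ) i).const_mul (c i)

lemma Eop_zero (A : Fin n → Fin n → ℝ) : Eop A (0 : MvPolynomial (Fin n) ℝ) = 0 := by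
  rw [Eop_eq_sum A 0 1 (by simp)]
  simp

lemma Eop_add (A : Fin n → Fin n → ℝ) (F G : MvPolynomial (Fin n) ℝ) :
    Eop A (F + G) = Eop A F + Eop A G := by
  simpa using Eop_smul_add A 1 F G

lemma Eop_smul (A : Fin n → Fin n → ℝ) (a : ℝ) (F : MvPolynomial (Fin n) ℝ) :
    Eop A (a • F) = a * Eop A F := by
  have := Eop_smul_add A a F 0
  simpa [Eop_zero] using this

theorem key (A : Fin n → Fin n → ℝ) (μ : Measure (Fin n → ℝ)) [IsProbabilityMeasure μ]
    (hpsd : ∀ c : Fin n → ℝ, 0 ≤ ∑ i, ∑ j, c i * c j * A i j)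
    (hμ : ∀ c : Fin n → ℝ, Measure.map (fun x => ∑ i, c i * x i) μ
      = gaussianReal 0 (∑ i, ∑ j, c i * c j * A i j).toNNReal)
    (F : MvPolynomial (Fin n) ℝ) :
    Integrable (fun x => eval x F) μ ∧ (∫ x, eval x F ∂μ) = Eop A F := by
  have hmem : F ∈ Submodule.span ℝ {P : MvPolynomial (Fin n) ℝ | ∃ c k, P = L c ^ k} := by
    rw [span_L_pow_eq_top]; trivial
  induction hmem using Submodule.span_induction with
  | mem P hP =>
    obtain ⟨c, k, rfl⟩ := hP
    have hev : (fun x => eval x (L c ^ k)) = fun x => (∑ i, c i * x i) ^ k := by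
      funext x
      rw [map_pow, eval_L]
    have hsm : AEStronglyMeasurable (fun y : ℝ => y ^ k)
        (Measure.map (fun x => ∑ i, c i * x i) μ) :=
      (measurable_id.pow_const k).aestronglyMeasurable
    have haem : AEMeasurable (fun x : Fin n → ℝ => ∑ i, c i * x i) μ :=
      (measurable_linfun c).aemeasurable
    have h1 : Integrable (fun y : ℝ => y ^ k)
        (Measure.map (fun x => ∑ i, c i * x i) μ) := by
      rw [hμ c]
      exact integrable_pow_gaussianReal _ k
    constructor
    · rw [hev]
      exact (integrable_map_measure hsm haem).mp h1
    · rw [hev]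
      have h2 : ∫ x, (∑ i, c i * x i) ^ k ∂μ
          = ∫ y, y ^ k ∂(Measure.map (fun x => ∑ i, c i * x i) μ) :=
        (integral_map haem hsm).symm
      rw [h2, hμ c, integral_pow_gaussianReal, Eop_L_pow,
        Real.coe_toNNReal _ (hpsd c)]
  | zero =>
    constructor
    · simpa using integrable_zero (Fin n → ℝ) ℝ μ
    · simp [Eop_zero]
  | add P Q hPm hQm hP hQ =>
    have hevadd : (fun x => eval x (P + Q)) = (fun x => eval x P) + fun x => eval x Q := by
      funext x
      simp [map_add]
    refine ⟨hevadd ▸ hP.1.add hQ.1, ?_⟩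
    rw [hevadd, Eop_add, ← hP.2, ← hQ.2, ← integral_add hP.1 hQ.1]
    rfl
  | smul a P hPm hP =>
    have hevsm : (fun x => eval x (a • P)) = fun x => a * eval x P := by
      funext x
      rw [eval0_smul]
    refine ⟨hevsm ▸ hP.1.const_mul a, ?_⟩
    rw [hevsm, Eop_smul, ← hP.2, integral_const_mul]

end GaussHeat

/-- Differential operator representation of Gaussian moments: for a positive
semidefinite symmetric matrix `C`, a centered Gaussian probability measure `μ` on `ℝⁿ`
with covariance `C` (characterized by its one-dimensional marginals), and a polynomial
`F`, the expectation `∫ F dμ` equals `[exp((1/2) ∑_{i,j} C_{ij} ∂ᵢ∂ⱼ) F](0)`, where the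
exponential acts as a finite sum (only terms up to the total degree of `F` survive). -/
theorem gaussian_moment_diff_op (n : ℕ) (C : Fin n → Fin n → ℝ)
    (hsymm : ∀ i j, C i j = C j i)
    (hpsd : ∀ c : Fin n → ℝ, 0 ≤ ∑ i, ∑ j, c i * c j * C i j)
    (μ : Measure (Fin n → ℝ)) [IsProbabilityMeasure μ]
    (hμ : ∀ c : Fin n → ℝ,
      Measure.map (fun x => ∑ i, c i * x i) μ =
        gaussianReal 0 (∑ i, ∑ j, c i * c j * C i j).toNNReal)
    (F : MvPolynomial (Fin n) ℝ) :
    (∫ x, eval x F ∂μ) =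
      ∑ m ∈ Finset.range (F.totalDegree + 1),
        (1 / (m.factorial : ℝ)) * eval (0 : Fin n → ℝ) ((heatOperator n C)^[m] F) := by
  rw [(GaussHeat.key C μ hpsd hμ F).2]
  exact GaussHeat.Eop_eq_sum C F (F.totalDegree + 1) (Nat.lt_succ_self _)
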